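/- Let μ be a compactly supported probability measure on ℝ with moments m_k = ∫ x^k dμ(x), and let a, b, c, d, e ∈ ℝ satisfy c + e ≠ 0 and (e ≠ 0 or d = 0). Suppose that for every n ≥ 1, a Σ_{i=0}^{n−2} m_i m_{n−2−i} + b Σ_{i=0}^{n−1} m_i m_{n−1−i} + c Σ_{i=0}^{n} m_i m_{n−i} + d m_{n−1} + e m_n = 0. Then the operator Q[f] = (a + b x + c x²) L_μ[L_μ[f]] + (d + e x) L_μ[f] on ℝ[x] has a polynomial system of eigenfunctions; it can be chosen of the form P_0 = 1 with eigenvalue 0, P_1 = x + α with e α = d and eigenvalue e, and P_n = x^n + β_n x + γ_n with eigenvalue c + e for n ≥ 2. -/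

import Mathlib

open MeasureTheory Polynomial

/-- Moments of a measure on ℝ. -/
noncomputable def mom (ρ : Measure ℝ) (k : ℕ) : ℝ := ∫ x, x ^ k ∂ρ

/-- The operator `L_ρ` on polynomials, defined via the moment sequence `m` of `ρ`:
`L[x^n] = Σ_{k=0}^{n-1} m_{n-1-k} x^k`. -/
noncomputable def Lop (m : ℕ → ℝ) (f : Polynomial ℝ) : Polynomial ℝ :=
  f.sum fun n a => C a * ∑ k ∈ Finset.range n, C (m (n - 1 - k)) * X ^ k

/-- A measure has compact support. -/
def CompactSupp (μ : Measure ℝ) : Prop := ∃ K : Set ℝ, IsCompact K ∧ μ Kᶜ = 0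

/-- A polynomial system of eigenfunctions for an operator on polynomials. -/
def HasPolyEigenfunctions (Q : Polynomial ℝ → Polynomial ℝ) : Prop :=
  ∃ (P : ℕ → Polynomial ℝ) (lam : ℕ → ℝ),
    (∀ n, (P n).degree = (n : WithBot ℕ)) ∧ (∀ n, Q (P n) = lam n • P n)

noncomputable def Spol (m : ℕ → ℝ) (n : ℕ) : Polynomial ℝ :=
  ∑ k ∈ Finset.range n, C (m (n - 1 - k)) * X ^ k

noncomputable def Tpol (m : ℕ → ℝ) (n : ℕ) : Polynomial ℝ :=
  ∑ k ∈ Finset.range n, C (m (n - 1 - k)) * Spol m k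

noncomputable def sconv (m : ℕ → ℝ) (j : ℕ) : ℝ :=
  ∑ i ∈ Finset.range (j + 1), m i * m (j - i)

lemma Lop_monomial (m : ℕ → ℝ) (n : ℕ) (r : ℝ) :
    Lop m (monomial n r) = C r * Spol m n := by
  unfold Lop Spol
  rw [Polynomial.sum_monomial_index]
  simp

lemma Lop_X_pow (m : ℕ → ℝ) (n : ℕ) : Lop m (X ^ n) = Spol m n := by
  rw [X_pow_eq_monomial, Lop_monomial]; simp

lemma Lop_add (m : ℕ → ℝ) (p q : Polynomial ℝ) :
    Lop m (p + q) = Lop m p + Lop m q := by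
  unfold Lop
  rw [Polynomial.sum_add_index] <;> intros <;> simp [add_mul]

lemma Lop_zero (m : ℕ → ℝ) : Lop m 0 = 0 := by simp [Lop]

lemma Lop_C (m : ℕ → ℝ) (r : ℝ) : Lop m (C r) = 0 := by
  rw [← monomial_zero_left, Lop_monomial]
  simp [Spol]

lemma Lop_sum (m : ℕ → ℝ) {ι : Type*} (t : Finset ι) (f : ι → Polynomial ℝ) :
    Lop m (∑ i ∈ t, f i) = ∑ i ∈ t, Lop m (f i) := by
  induction t using Finset.cons_induction with
  | empty => simp [Lop_zero]
  | cons i t hi ih => simp [Finset.sum_cons, Lop_add, ih]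

lemma Lop_Spol (m : ℕ → ℝ) (n : ℕ) : Lop m (Spol m n) = Tpol m n := by
  unfold Spol Tpol
  rw [Lop_sum]
  refine Finset.sum_congr rfl fun k _ => ?_
  rw [C_mul_X_pow_eq_monomial, Lop_monomial]

lemma coeff_Spol (m : ℕ → ℝ) (n t : ℕ) :
    (Spol m n).coeff t = if t < n then m (n - 1 - t) else 0 := by
  unfold Spol
  rw [Polynomial.finset_sum_coeff]
  simp only [coeff_C_mul, coeff_X_pow, mul_ite, mul_one, mul_zero]
  rw [Finset.sum_ite_eq (Finset.range n) t (fun k => m (n - 1 - k))]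
  simp [Finset.mem_range]

lemma coeff_Tpol (m : ℕ → ℝ) (n t : ℕ) :
    (Tpol m n).coeff t = if t + 2 ≤ n then sconv m (n - 2 - t) else 0 := by
  unfold Tpol
  rw [Polynomial.finset_sum_coeff]
  simp only [coeff_C_mul, coeff_Spol, mul_ite, mul_zero]
  rw [← Finset.sum_filter]
  have hf : (Finset.range n).filter (fun k => t < k) = Finset.Ico (t + 1) n := by
    ext k; simp [Finset.mem_filter, Finset.mem_range, Finset.mem_Ico]; omega
  rw [hf, Finset.sum_Ico_eq_sum_range]
  by_cases h : t + 2 ≤ n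
  · rw [if_pos h]
    unfold sconv
    rw [show n - (t + 1) = (n - 2 - t) + 1 by omega]
    refine Finset.sum_congr rfl fun i hi => ?_
    have h1 : n - 1 - (t + 1 + i) = n - 2 - t - i := by omega
    have h2 : t + 1 + i - 1 - t = i := by omega
    rw [h1, h2, mul_comm]
  · rw [if_neg h, show n - (t + 1) = 0 by omega]
    simp

lemma coeff_X_mul' (p : Polynomial ℝ) (t : ℕ) :
    ((X : Polynomial ℝ) * p).coeff t = if t = 0 then 0 else p.coeff (t - 1) := by
  cases t with
  | zero => simp [Polynomial.mul_coeff_zero]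
  | succ t => simp [Polynomial.coeff_X_mul]

lemma coeff_X2_mul (p : Polynomial ℝ) (t : ℕ) :
    ((X : Polynomial ℝ) ^ 2 * p).coeff t = if t < 2 then 0 else p.coeff (t - 2) := by
  rw [pow_two, mul_assoc]
  rcases t with _ | _ | t
  · simp [coeff_X_mul']
  · simp [coeff_X_mul']
  · simp only [coeff_X_mul']
    have h : ¬ (t + 1 + 1 < 2) := by omega
    simp [h, show t + 1 + 1 - 2 = t by omega]

lemma Lop_one (m : ℕ → ℝ) : Lop m 1 = 0 := by
  rw [show (1 : Polynomial ℝ) = X ^ 0 by rw [pow_zero], Lop_X_pow]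
  simp [Spol]

lemma Lop_X (m : ℕ → ℝ) (hm0 : m 0 = 1) : Lop m X = 1 := by
  rw [show (X : Polynomial ℝ) = X ^ 1 by rw [pow_one], Lop_X_pow]
  simp [Spol, hm0]

lemma key_eq (m : ℕ → ℝ) (hm0 : m 0 = 1) (a b c d e : ℝ)
    (hrec2 : ∀ N, 2 ≤ N → a * sconv m (N - 2) + b * sconv m (N - 1) + c * sconv m N
      + d * m (N - 1) + e * m N = 0)
    (hrec1 : b * sconv m 0 + c * sconv m 1 + d + e * m 1 = 0)
    (n : ℕ) (hn : 2 ≤ n) (B G : ℝ) (hB : B = -sconv m (n - 1))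
    (hG : (c + e) * G = B * d - b * sconv m (n - 1) - c * sconv m n - e * m n) :
    (C a + C b * X + C c * X ^ 2) * Lop m (Lop m (X ^ n + C B * X + C G))
      + (C d + C e * X) * Lop m (X ^ n + C B * X + C G)
      = (c + e) • (X ^ n + C B * X + C G) := by
  have hsc0 : sconv m 0 = 1 := by simp [sconv, hm0]
  have hLBX : Lop m (C B * X) = C B := by
    rw [show (C B * X : Polynomial ℝ) = monomial 1 B by
        rw [← C_mul_X_pow_eq_monomial, pow_one], Lop_monomial]
    simp [Spol, hm0]
  have hL : Lop m (X ^ n + C B * X + C G) = Spol m n + C B := by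
    rw [Lop_add, Lop_add, Lop_X_pow, hLBX, Lop_C, add_zero]
  have hLL : Lop m (Spol m n + C B) = Tpol m n := by
    rw [Lop_add, Lop_Spol, Lop_C, add_zero]
  rw [hL, hLL]
  have expand : (C a + C b * X + C c * X ^ 2) * Tpol m n + (C d + C e * X) * (Spol m n + C B)
      = C a * Tpol m n + C b * (X * Tpol m n) + C c * (X ^ 2 * Tpol m n)
        + (C d * Spol m n + C e * (X * Spol m n)) + (C (B * d) + C (B * e) * X) := by
    simp only [C_mul]; ring
  rw [expand]
  ext t
  simp only [coeff_add, coeff_C_mul, coeff_Tpol, coeff_Spol, coeff_X_mul', coeff_X2_mul,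
    coeff_smul, coeff_X_pow, coeff_C, coeff_X, smul_eq_mul, mul_ite, mul_zero, mul_one]
  rcases t with _ | _ | t
  · -- t = 0
    have h1 : 0 + 2 ≤ n := by omega
    have h2 : (0 : ℕ) < n := by omega
    have h3 : ¬ ((0 : ℕ) = n) := by omega
    simp only [if_pos h1, if_pos h2, if_neg h3, if_pos rfl, Nat.sub_zero]
    norm_num
    have hr := hrec2 n hn
    linear_combination hr - hG
  · -- t = 1
    by_cases h3n : 3 ≤ n
    · have h1 : 1 + 2 ≤ n := by omega
      have h2 : (1 : ℕ) < n := by omega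
      have h3 : ¬ ((1 : ℕ) = n) := by omega
      simp only [if_pos h1, if_pos h2, if_neg h3, Nat.sub_zero]
      norm_num
      have hr := hrec2 (n - 1) (by omega)
      rw [show n - 1 - 2 = n - 3 by omega, show n - 1 - 1 = n - 2 by omega] at hr
      rw [if_pos (show 2 ≤ n by omega), if_pos (show 0 < n by omega),
        show n - 2 - 1 = n - 3 by omega, show n - 1 - 1 = n - 2 by omega]
      linear_combination hr - c * hB
    · have hn2 : n = 2 := by omega
      subst hn2
      norm_num
      linear_combination hrec1 - c * hB + d * hm0
  · -- t ≥ 2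
    by_cases hA : t + 2 + 2 ≤ n
    · -- interior
      norm_num
      simp only [if_pos (show t + 1 + 1 + 2 ≤ n by omega), if_pos (show t + 1 + 2 ≤ n by omega),
        if_neg (show ¬ (t + 1 + 1 < 2) by omega), if_pos (show t + 1 + 1 ≤ n by omega),
        if_pos (show t + 1 + 1 < n by omega), if_pos (show t + 1 < n by omega),
        if_neg (show ¬ (t + 1 + 1 = n) by omega),
        show n - 2 - (t + 1 + 1) = n - 2 - t - 2 by omega,
        show n - 2 - (t + 1) = n - 2 - t - 1 by omega,
        show t + 1 + 1 - 2 = t by omega,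
        show n - 1 - (t + 1 + 1) = n - 2 - t - 1 by omega,
        show n - 1 - (t + 1) = n - 2 - t by omega]
      linear_combination hrec2 (n - 2 - t) (by omega)
    · by_cases hBc : t + 2 + 1 ≤ n
      · norm_num
        simp only [if_neg (show ¬ (t + 1 + 1 + 2 ≤ n) by omega), if_pos (show t + 1 + 2 ≤ n by omega),
          if_neg (show ¬ (t + 1 + 1 < 2) by omega), if_pos (show t + 1 + 1 ≤ n by omega),
          if_pos (show t + 1 + 1 < n by omega), if_pos (show t + 1 < n by omega),
          if_neg (show ¬ (t + 1 + 1 = n) by omega),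
          show n - 2 - (t + 1) = 0 by omega,
          show t + 1 + 1 - 2 = t by omega,
          show n - 2 - t = 1 by omega,
          show n - 1 - (t + 1 + 1) = 0 by omega,
          show n - 1 - (t + 1) = 1 by omega]
        linear_combination hrec1 + d * hm0
      · by_cases hC : t + 2 ≤ n
        · have hn2 : n = t + 2 := by omega
          subst hn2
          norm_num
          simp only [if_neg (show ¬ (t + 1 + 1 < 2) by omega), show t + 1 + 1 - 2 = t by omega,
            Nat.sub_self]
          linear_combination c * hsc0 + e * hm0
        · norm_num
          split_ifs <;> first | omega | norm_num

theorem stmt2 (μ : Measure ℝ) [IsProbabilityMeasure μ] (hcs : CompactSupp μ)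
    (a b c d e : ℝ) (hce : c + e ≠ 0) (hed : e ≠ 0 ∨ d = 0)
    (hrec : ∀ n : ℕ, 1 ≤ n →
      a * (∑ i ∈ Finset.range (n - 1), mom μ i * mom μ (n - 2 - i))
      + b * (∑ i ∈ Finset.range n, mom μ i * mom μ (n - 1 - i))
      + c * (∑ i ∈ Finset.range (n + 1), mom μ i * mom μ (n - i))
      + d * mom μ (n - 1) + e * mom μ n = 0) :
    HasPolyEigenfunctions
      (fun f => (C a + C b * X + C c * X ^ 2) * Lop (mom μ) (Lop (mom μ) f)
        + (C d + C e * X) * Lop (mom μ) f)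
    ∧ ∃ (α : ℝ) (β γ : ℕ → ℝ),
        e * α = d ∧
        (let Q := fun f => (C a + C b * X + C c * X ^ 2) * Lop (mom μ) (Lop (mom μ) f)
          + (C d + C e * X) * Lop (mom μ) f
         Q 1 = (0 : ℝ) • (1 : Polynomial ℝ) ∧
         Q (X + C α) = e • (X + C α) ∧
         ∀ n : ℕ, 2 ≤ n →
           Q (X ^ n + C (β n) * X + C (γ n)) = (c + e) • (X ^ n + C (β n) * X + C (γ n))) := by
  have hm0 : mom μ 0 = 1 := by simp [mom]
  have hrec2 : ∀ N, 2 ≤ N → a * sconv (mom μ) (N - 2) + b * sconv (mom μ) (N - 1)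
      + c * sconv (mom μ) N + d * mom μ (N - 1) + e * mom μ N = 0 := by
    intro N hN
    have h := hrec N (by omega)
    have e1 : sconv (mom μ) (N - 2) = ∑ i ∈ Finset.range (N - 1), mom μ i * mom μ (N - 2 - i) := by
      unfold sconv; rw [show N - 2 + 1 = N - 1 by omega]
    have e2 : sconv (mom μ) (N - 1) = ∑ i ∈ Finset.range N, mom μ i * mom μ (N - 1 - i) := by
      unfold sconv; rw [show N - 1 + 1 = N by omega]
    have e3 : sconv (mom μ) N = ∑ i ∈ Finset.range (N + 1), mom μ i * mom μ (N - i) := rfl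
    rw [e1, e2, e3]; linarith [h]
  have hrec1 : b * sconv (mom μ) 0 + c * sconv (mom μ) 1 + d + e * mom μ 1 = 0 := by
    have h := hrec 1 le_rfl
    have e2 : sconv (mom μ) 1 = ∑ i ∈ Finset.range 2, mom μ i * mom μ (1 - i) := rfl
    unfold sconv
    norm_num at h ⊢
    rw [hm0] at h ⊢
    linarith [h]
  obtain ⟨α, hα⟩ : ∃ α : ℝ, e * α = d := by
    rcases hed with he | hd
    · exact ⟨d / e, by field_simp⟩
    · exact ⟨0, by simp [hd]⟩
  set β : ℕ → ℝ := fun n => -sconv (mom μ) (n - 1) with hβ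
  set γ : ℕ → ℝ := fun n => (β n * d - b * sconv (mom μ) (n - 1) - c * sconv (mom μ) n
    - e * mom μ n) / (c + e) with hγ
  have hGn : ∀ n, (c + e) * γ n = β n * d - b * sconv (mom μ) (n - 1) - c * sconv (mom μ) n
      - e * mom μ n := by
    intro n
    rw [hγ]
    field_simp
  have hkey : ∀ n, 2 ≤ n →
      (C a + C b * X + C c * X ^ 2) * Lop (mom μ) (Lop (mom μ) (X ^ n + C (β n) * X + C (γ n)))
        + (C d + C e * X) * Lop (mom μ) (X ^ n + C (β n) * X + C (γ n))
        = (c + e) • (X ^ n + C (β n) * X + C (γ n)) := by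
    intro n hn
    exact key_eq (mom μ) hm0 a b c d e hrec2 hrec1 n hn _ _ rfl (hGn n)
  have hQ1 : (C a + C b * X + C c * X ^ 2) * Lop (mom μ) (Lop (mom μ) 1)
      + (C d + C e * X) * Lop (mom μ) 1 = 0 := by
    rw [Lop_one, Lop_zero]; ring
  have hQX : (C a + C b * X + C c * X ^ 2) * Lop (mom μ) (Lop (mom μ) (X + C α))
      + (C d + C e * X) * Lop (mom μ) (X + C α) = e • (X + C α) := by
    rw [Lop_add, Lop_X _ hm0, Lop_C, add_zero, Lop_one, mul_zero, zero_add, mul_one]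
    rw [Polynomial.smul_eq_C_mul, mul_add, ← C_mul, hα]
    ring
  have hdeg2 : ∀ k : ℕ, 2 ≤ k → ∀ u v : ℝ,
      (X ^ k + C u * X + C v : Polynomial ℝ).degree = (k : WithBot ℕ) := by
    intro k hk u v
    rw [add_assoc, degree_add_eq_left_of_degree_lt, degree_X_pow]
    rw [degree_X_pow]
    calc (C u * X + C v : Polynomial ℝ).degree ≤ 1 := degree_linear_le
      _ < (k : WithBot ℕ) := by exact_mod_cast (by omega : 1 < k)
  constructor
  · refine ⟨fun n => match n with
        | 0 => 1
        | 1 => X + C α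
        | (k + 2) => X ^ (k + 2) + C (β (k + 2)) * X + C (γ (k + 2)),
      fun n => match n with
        | 0 => 0
        | 1 => e
        | (k + 2) => c + e, ?_, ?_⟩
    · intro n
      match n with
      | 0 => simp
      | 1 => simp [degree_X_add_C]
      | (k + 2) => exact hdeg2 (k + 2) (by omega) _ _
    · intro n
      match n with
      | 0 => simpa using hQ1
      | 1 => exact hQX
      | (k + 2) => exact hkey (k + 2) (by omega)
  · refine ⟨α, β, γ, hα, ?_, ?_, ?_⟩
    · simpa using hQ1
    · exact hQX
    · intro n hn
      exact hkey n hn
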